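/- arXiv:2510.13295 — 2 statements merged into one kernel-verified Lean document; each statement's English description precedes it below -/
import Mathlib

section
/- Euler's reduction formula: for every integer s ≥ 2, ζ(s,1) = (1/2)·( s·ζ(s+1) − Σ_{j=1}^{s−2} ζ(j+1)·ζ(s−j) ). -/
open Filter

/-- Harmonic number `H m = Σ_{j=1}^m 1/j`. -/
noncomputable def Hh (m : ℕ) : ℝ := ∑ j ∈ Finset.range m, 1/((j:ℝ)+1)

lemma Hh_nonneg (m : ℕ) : 0 ≤ Hh m :=
  Finset.sum_nonneg fun j _ => by positivity

lemma Hh_succ (m : ℕ) : Hh (m+1) = Hh m + 1/((m:ℝ)+1) :=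
  Finset.sum_range_succ _ m

lemma hasSum_aux (N : ℕ) (hN : 0 < N) :
    HasSum (fun k:ℕ => 1/(((k:ℝ)+1)*((k:ℝ)+1+N))) (Hh N / N) := by
  have hNR : (0:ℝ) < N := by exact_mod_cast hN
  have key : HasSum (fun k:ℕ => 1/((k:ℝ)+1) - 1/((k:ℝ)+1+N)) (Hh N) := by
    rw [hasSum_iff_tendsto_nat_of_nonneg]
    · have heq : ∀ K : ℕ, ∑ k ∈ Finset.range K, (1/((k:ℝ)+1) - 1/((k:ℝ)+1+N))
          = Hh N - (Hh (K+N) - Hh K) := by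
        intro K
        have h1 : ∑ k ∈ Finset.range K, (1/((k:ℝ)+1+N))
            = Hh (N+K) - Hh N := by
          have h0 := Finset.sum_range_add (fun j => 1/((j:ℝ)+1)) N K
          have h2 : ∑ x ∈ Finset.range K, 1 / (((N + x : ℕ) :ℝ) + 1)
              = ∑ k ∈ Finset.range K, (1/((k:ℝ)+1+N)) := by
            apply Finset.sum_congr rfl; intro x _; push_cast; ring_nf
          rw [Hh, Hh, h0, h2]
          ring
        have h3 : Hh (N+K) = Hh (K+N) := by rw [Nat.add_comm]
        rw [Finset.sum_sub_distrib, h1, h3]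
        have h4 : ∑ k ∈ Finset.range K, (1/((k:ℝ)+1)) = Hh K := rfl
        rw [h4]; ring
      simp only [heq]
      have htail : Tendsto (fun K : ℕ => Hh (K+N) - Hh K) atTop (nhds 0) := by
        apply squeeze_zero (g := fun K : ℕ => (N:ℝ)/((K:ℝ)+1))
        · intro K
          have h0 := Finset.sum_range_add (fun j => 1/((j:ℝ)+1)) K N
          rw [Hh, Hh, h0]
          have : 0 ≤ ∑ x ∈ Finset.range N, 1 / (((K + x : ℕ):ℝ) + 1) :=
            Finset.sum_nonneg fun j _ => by positivity
          linarith
        · intro K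
          have h0 := Finset.sum_range_add (fun j => 1/((j:ℝ)+1)) K N
          rw [Hh, Hh, h0]
          have hb : ∑ x ∈ Finset.range N, 1 / (((K + x:ℕ):ℝ) + 1)
              ≤ ∑ _x ∈ Finset.range N, 1 / ((K:ℝ) + 1) := by
            apply Finset.sum_le_sum
            intro x _
            apply one_div_le_one_div_of_le (by positivity)
            push_cast
            have : (0:ℝ) ≤ x := by positivity
            linarith
          simp only [Finset.sum_const, Finset.card_range, nsmul_eq_mul] at hb
          calc ∑ j ∈ Finset.range K, 1 / ((j:ℝ) + 1)
                + ∑ x ∈ Finset.range N, 1 / (((K + x:ℕ):ℝ) + 1)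
                - ∑ j ∈ Finset.range K, 1 / ((j:ℝ) + 1)
              = ∑ x ∈ Finset.range N, 1 / (((K + x:ℕ):ℝ) + 1) := by ring
            _ ≤ (N:ℝ) * (1/((K:ℝ)+1)) := hb
            _ = (N:ℝ)/((K:ℝ)+1) := by ring
        · have h0 : Tendsto (fun K : ℕ => ((N:ℝ)/((K+1:ℕ):ℝ))) atTop (nhds 0) :=
            (tendsto_const_div_atTop_nhds_zero_nat (N:ℝ)).comp (tendsto_add_atTop_nat 1)
          simpa using h0
      have := htail.const_sub (Hh N)
      simpa using this
    · intro k
      have h1 : (0:ℝ) < (k:ℝ)+1 := by positivity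
      have h2 : (k:ℝ)+1 ≤ (k:ℝ)+1+N := by linarith
      have := one_div_le_one_div_of_le h1 h2
      linarith
  have hd := key.div_const (N:ℝ)
  have heq : (fun k:ℕ => (1/((k:ℝ)+1) - 1/((k:ℝ)+1+N))/(N:ℝ))
      = fun k:ℕ => 1/(((k:ℝ)+1)*((k:ℝ)+1+N)) := by
    funext k
    have h1 : ((k:ℝ)+1) ≠ 0 := by positivity
    have h2 : ((k:ℝ)+1+N) ≠ 0 := by positivity
    field_simp
    ring
  rwa [heq] at hd

open scoped ENNReal

/-- The (single) zeta value `ζ(k) = Σ_{n≥1} 1/n^k`. -/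
noncomputable def zeta (k : ℕ) : ℝ := ∑' n : ℕ, (1 : ℝ) / ((n : ℝ) + 1) ^ k

/-- The double zeta value `ζ(a,b) = Σ_{m>n>0} 1/(m^a·n^b)`. -/
noncomputable def dzeta (a b : ℕ) : ℝ :=
  ∑' p : {p : ℕ × ℕ // p.2 < p.1 ∧ 0 < p.2},
    (1 : ℝ) / ((p.1.1 : ℝ) ^ a * (p.1.2 : ℝ) ^ b)

noncomputable def ZE (k : ℕ) : ℝ≥0∞ := ∑' n : ℕ, (((n:ℝ≥0∞)+1)^k)⁻¹

noncomputable def DE (a b : ℕ) : ℝ≥0∞ :=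
  ∑' p : {p : ℕ × ℕ // p.2 < p.1 ∧ 0 < p.2},
    ((p.1.1:ℝ≥0∞)^a * (p.1.2:ℝ≥0∞)^b)⁻¹

lemma zeta_eq (k : ℕ) : zeta k = (ZE k).toReal := by
  rw [ZE, ENNReal.tsum_toReal_eq]
  · apply tsum_congr
    intro n
    have : ((n:ℝ≥0∞)+1) = ((((n:ℕ)+1 : ℕ) : ℝ≥0∞)) := by push_cast; ring
    rw [this, ENNReal.toReal_inv, one_div, ENNReal.toReal_pow, ENNReal.toReal_natCast]
    push_cast
    ring
  · intro n
    exact ENNReal.inv_ne_top.2 (pow_ne_zero _ (by simp))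

lemma dzeta_eq (a b : ℕ) : dzeta a b = (DE a b).toReal := by
  rw [DE, ENNReal.tsum_toReal_eq]
  · apply tsum_congr
    intro p
    rw [ENNReal.toReal_inv, one_div, ENNReal.toReal_mul, ENNReal.toReal_pow,
      ENNReal.toReal_pow, ENNReal.toReal_natCast, ENNReal.toReal_natCast]
  · intro p
    apply ENNReal.inv_ne_top.2
    have h1 : ((p.1.1:ℝ≥0∞)) ≠ 0 := by
      simp only [ne_eq, Nat.cast_eq_zero]; omega
    have h2 : ((p.1.2:ℝ≥0∞)) ≠ 0 := by
      simp only [ne_eq, Nat.cast_eq_zero]; omega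
    exact mul_ne_zero (pow_ne_zero _ h1) (pow_ne_zero _ h2)

lemma tsum_shift (f : ℕ → ℝ≥0∞) (h : f 0 = 0) : ∑' n, f n = ∑' n, f (n+1) := by
  rw [tsum_eq_zero_add' ENNReal.summable, h, zero_add]

noncomputable def gg (a b : ℕ) (p : ℕ × ℕ) : ℝ≥0∞ :=
  ((p.1:ℝ≥0∞)^a * (p.2:ℝ≥0∞)^b)⁻¹

lemma DE_eq_indicator (a b : ℕ) :
    DE a b = ∑' p : ℕ × ℕ, Set.indicator {p : ℕ×ℕ | p.2 < p.1 ∧ 0 < p.2} (gg a b) p :=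
  tsum_subtype {p : ℕ×ℕ | p.2 < p.1 ∧ 0 < p.2} (gg a b)

/-- grid to positive quadrant -/
def eqPos : ℕ × ℕ ≃ ↥{p : ℕ×ℕ | 0 < p.1 ∧ 0 < p.2} where
  toFun q := ⟨(q.1+1, q.2+1), ⟨Nat.succ_pos _, Nat.succ_pos _⟩⟩
  invFun x := (x.1.1 - 1, x.1.2 - 1)
  left_inv q := by simp
  right_inv x := by
    apply Subtype.ext
    obtain ⟨⟨m,n⟩, h1, h2⟩ := x
    simp only at h1 h2 ⊢
    ext <;> simp <;> omega

/-- naturals to the positive diagonal -/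
def eqDiag : ℕ ≃ ↥{p : ℕ×ℕ | p.1 = p.2 ∧ 0 < p.1} where
  toFun n := ⟨(n+1, n+1), ⟨rfl, Nat.succ_pos _⟩⟩
  invFun x := x.1.1 - 1
  left_inv n := by simp
  right_inv x := by
    apply Subtype.ext
    obtain ⟨⟨m,n⟩, h1, h2⟩ := x
    simp only at h1 h2 ⊢
    subst h1
    ext <;> simp <;> omega

lemma stuffleE (a b : ℕ) (ha : 1 ≤ a) (hb : 1 ≤ b) :
    ZE a * ZE b = DE a b + DE b a + ZE (a+b) := by
  classical
  have hL : ZE a * ZE b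
      = ∑' p : ℕ × ℕ, Set.indicator {p : ℕ×ℕ | 0 < p.1 ∧ 0 < p.2} (gg a b) p := by
    rw [ZE, ZE, ← ENNReal.tsum_mul_right]
    have h1 : ∀ m : ℕ, ((((m:ℝ≥0∞)+1)^a)⁻¹ * ∑' n : ℕ, (((n:ℝ≥0∞)+1)^b)⁻¹)
        = ∑' n : ℕ, (((m:ℝ≥0∞)+1)^a)⁻¹ * (((n:ℝ≥0∞)+1)^b)⁻¹ := by
      intro m; rw [ENNReal.tsum_mul_left]
    simp only [h1]
    rw [← ENNReal.tsum_prod, ← tsum_subtype, ← eqPos.tsum_eq]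
    apply tsum_congr
    intro q
    simp only [eqPos, Equiv.coe_fn_mk, gg]
    rw [ENNReal.mul_inv (Or.inl (by positivity))
      (Or.inl (ENNReal.pow_ne_top (by simp)))]
    push_cast
    ring
  rw [hL]
  have hsplit : ∀ p : ℕ × ℕ,
      Set.indicator {p : ℕ×ℕ | 0 < p.1 ∧ 0 < p.2} (gg a b) p
      = Set.indicator {p : ℕ×ℕ | p.2 < p.1 ∧ 0 < p.2} (gg a b) p
        + Set.indicator {p : ℕ×ℕ | p.1 < p.2 ∧ 0 < p.1} (gg a b) p
        + Set.indicator {p : ℕ×ℕ | p.1 = p.2 ∧ 0 < p.1} (gg a b) p := by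
    intro p
    simp only [Set.indicator_apply, Set.mem_setOf_eq]
    split_ifs with h1 h2 h3 h4 h5 h6 h7 h8 h9 h10 h11 h12 h13 h14
    all_goals try ring
    all_goals (exfalso; omega)
  simp only [hsplit]
  rw [ENNReal.tsum_add, ENNReal.tsum_add]
  congr 1
  · congr 1
    · exact (DE_eq_indicator a b).symm
    · rw [DE_eq_indicator b a, ← (Equiv.prodComm ℕ ℕ).tsum_eq]
      apply tsum_congr
      intro q
      simp only [Equiv.prodComm_apply, Prod.fst_swap, Prod.snd_swap,
        Set.indicator_apply, Set.mem_setOf_eq, gg]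
      split_ifs with h
      · ring
      · rfl
  · rw [← tsum_subtype, ← eqDiag.tsum_eq, ZE]
    apply tsum_congr
    intro n
    simp only [eqDiag, Equiv.coe_fn_mk, gg, ← pow_add]
    push_cast
    ring_nf

lemma natCast_inv_eq {c : ℕ} (hc : 0 < c) :
    ((c:ℝ≥0∞))⁻¹ = ENNReal.ofReal (1/(c:ℝ)) := by
  rw [one_div, ENNReal.ofReal_inv_of_pos (by exact_mod_cast hc), ENNReal.ofReal_natCast]

lemma summable_zeta (k : ℕ) (hk : 2 ≤ k) :
    Summable (fun n : ℕ => (1:ℝ)/((n:ℝ)+1)^k) := by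
  have h1 : Summable (fun n : ℕ => (1:ℝ)/(n:ℝ)^k) :=
    Real.summable_one_div_nat_pow.2 hk
  have h2 := (summable_nat_add_iff 1).2 h1
  apply h2.congr
  intro n
  push_cast
  ring

lemma ZE_ne_top {k : ℕ} (hk : 2 ≤ k) : ZE k ≠ ⊤ := by
  have : ZE k = ENNReal.ofReal (∑' n : ℕ, (1:ℝ)/((n:ℝ)+1)^k) := by
    rw [ENNReal.ofReal_tsum_of_nonneg (fun n => by positivity) (summable_zeta k hk)]
    apply tsum_congr
    intro n
    have h1 : ((n:ℝ≥0∞)+1) = (((n+1:ℕ)):ℝ≥0∞) := by push_cast; ring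
    rw [h1, ← Nat.cast_pow, natCast_inv_eq (by positivity)]
    congr 1
    push_cast
    ring
  rw [this]
  exact ENNReal.ofReal_ne_top

lemma summable_dzeta (a b : ℕ) (ha : 2 ≤ a) (hb : 1 ≤ b) :
    Summable (fun p : {p : ℕ × ℕ // p.2 < p.1 ∧ 0 < p.2} =>
      (1:ℝ)/((p.1.1:ℝ)^a * (p.1.2:ℝ)^b)) := by
  have hf : Summable (fun n : ℕ => (1:ℝ)/(n:ℝ)^((3:ℝ)/2)) :=
    Real.summable_one_div_nat_rpow.2 (by norm_num)
  have hg : Summable (fun q : ℕ × ℕ => ((1:ℝ)/(q.1:ℝ)^((3:ℝ)/2)) * ((1:ℝ)/(q.2:ℝ)^((3:ℝ)/2))) :=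
    Summable.mul_of_nonneg (f := fun n : ℕ => (1:ℝ)/(n:ℝ)^((3:ℝ)/2))
      (g := fun n : ℕ => (1:ℝ)/(n:ℝ)^((3:ℝ)/2))
      hf hf (fun n => by positivity) (fun n => by positivity)
  have hgs := hg.subtype {p : ℕ × ℕ | p.2 < p.1 ∧ 0 < p.2}
  apply Summable.of_nonneg_of_le (fun p => by positivity) _ hgs
  rintro ⟨⟨m, n⟩, hnm, hn⟩
  simp only
  have hm : 0 < m := lt_trans hn hnm
  have hm0 : (0:ℝ) < m := by exact_mod_cast hm
  have hn0 : (0:ℝ) < n := by exact_mod_cast hn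
  have hm1 : (1:ℝ) ≤ m := by exact_mod_cast hm
  have hn1 : (1:ℝ) ≤ n := by exact_mod_cast hn
  have hnm' : (n:ℝ) ≤ m := by exact_mod_cast le_of_lt hnm
  simp only [Function.comp_apply, one_div, ← mul_inv]
  apply inv_anti₀ (by positivity)
  -- goal : m^{3/2} * n^{3/2} ≤ m^a * n^b
  have key : (m:ℝ)^((3:ℝ)/2) * (n:ℝ)^((3:ℝ)/2) ≤ (m:ℝ)^2 * (n:ℝ)^1 := by
    have e1 : (m:ℝ)^((3:ℝ)/2) = (m:ℝ) * (m:ℝ)^((1:ℝ)/2) := by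
      rw [show ((3:ℝ)/2) = 1 + 1/2 by norm_num, Real.rpow_add hm0, Real.rpow_one]
    have e2 : (n:ℝ)^((3:ℝ)/2) = (n:ℝ) * (n:ℝ)^((1:ℝ)/2) := by
      rw [show ((3:ℝ)/2) = 1 + 1/2 by norm_num, Real.rpow_add hn0, Real.rpow_one]
    have e3 : (n:ℝ)^((1:ℝ)/2) ≤ (m:ℝ)^((1:ℝ)/2) :=
      Real.rpow_le_rpow (le_of_lt hn0) hnm' (by norm_num)
    have e4 : (m:ℝ)^((1:ℝ)/2) * (m:ℝ)^((1:ℝ)/2) = (m:ℝ) := by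
      rw [← Real.rpow_add hm0]; norm_num
    have e5 : (m:ℝ)^((1:ℝ)/2) * (n:ℝ)^((1:ℝ)/2) ≤ (m:ℝ) := by
      calc (m:ℝ)^((1:ℝ)/2) * (n:ℝ)^((1:ℝ)/2)
          ≤ (m:ℝ)^((1:ℝ)/2) * (m:ℝ)^((1:ℝ)/2) := by
            apply mul_le_mul_of_nonneg_left e3 (Real.rpow_nonneg (le_of_lt hm0) _)
        _ = (m:ℝ) := e4
    calc (m:ℝ)^((3:ℝ)/2) * (n:ℝ)^((3:ℝ)/2)
        = ((m:ℝ)*(n:ℝ)) * ((m:ℝ)^((1:ℝ)/2) * (n:ℝ)^((1:ℝ)/2)) := by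
          rw [e1, e2]; ring
      _ ≤ ((m:ℝ)*(n:ℝ)) * (m:ℝ) := by
          apply mul_le_mul_of_nonneg_left e5 (by positivity)
      _ = (m:ℝ)^2 * (n:ℝ)^1 := by ring
  refine le_trans key ?_
  apply mul_le_mul
  · exact pow_le_pow_right₀ hm1 ha
  · exact pow_le_pow_right₀ hn1 hb
  · positivity
  · positivity

lemma DE_eq_ofReal (a b : ℕ) (ha : 2 ≤ a) (hb : 1 ≤ b) :
    DE a b = ENNReal.ofReal (∑' p : {p : ℕ × ℕ // p.2 < p.1 ∧ 0 < p.2},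
      (1:ℝ)/((p.1.1:ℝ)^a * (p.1.2:ℝ)^b)) := by
  rw [ENNReal.ofReal_tsum_of_nonneg (fun p => by positivity) (summable_dzeta a b ha hb)]
  apply tsum_congr
  intro p
  have hm : 0 < p.1.1 := lt_trans p.2.2 p.2.1
  have hn : 0 < p.1.2 := p.2.2
  have h1 : ((p.1.1:ℝ≥0∞)^a * (p.1.2:ℝ≥0∞)^b) = (((p.1.1^a * p.1.2^b : ℕ)):ℝ≥0∞) := by
    push_cast; ring
  rw [h1, natCast_inv_eq (by positivity)]
  congr 1
  push_cast
  ring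

lemma DE_ne_top {a b : ℕ} (ha : 2 ≤ a) (hb : 1 ≤ b) : DE a b ≠ ⊤ := by
  rw [DE_eq_ofReal a b ha hb]
  exact ENNReal.ofReal_ne_top
/-- Real geometric/partial-fraction identity. -/
lemma ptwiseR (t : ℕ) (N K : ℝ) (hN : 0 < N) (hK : 0 < K) :
    ∑ a ∈ Finset.Icc 2 (t+2), ((N+K)^a * N^(t+3-a))⁻¹ + (K * (N+K)^(t+2))⁻¹
      = (N^(t+1) * K * (N+K))⁻¹ := by
  have hM : (N+K) ≠ 0 := by positivity
  have hN' : N ≠ 0 := ne_of_gt hN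
  have hK' : K ≠ 0 := ne_of_gt hK
  induction t with
  | zero =>
    rw [show (0:ℕ)+2 = 2 from rfl, Finset.Icc_self, Finset.sum_singleton]
    norm_num
    field_simp
    ring
  | succ t ih =>
    have hins : Finset.Icc 2 (t+1+2) = insert (t+3) (Finset.Icc 2 (t+2)) := by
      ext x
      simp only [Finset.mem_Icc, Finset.mem_insert]
      omega
    rw [hins, Finset.sum_insert (by simp)]
    have he1 : t+1+3-(t+3) = 1 := by omega
    have hcong : ∀ a ∈ Finset.Icc 2 (t+2), ((N+K)^a * N^(t+1+3-a))⁻¹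
        = ((N+K)^a * N^(t+3-a))⁻¹ * N⁻¹ := by
      intro a hA
      rw [Finset.mem_Icc] at hA
      have h' : t+1+3-a = (t+3-a)+1 := by omega
      rw [h', pow_succ]
      ring
    rw [Finset.sum_congr rfl hcong, ← Finset.sum_mul, he1]
    have hS : ∑ a ∈ Finset.Icc 2 (t+2), ((N+K)^a * N^(t+3-a))⁻¹
        = (N^(t+1) * K * (N+K))⁻¹ - (K * (N+K)^(t+2))⁻¹ := by linarith [ih]
    rw [hS]
    have h1 : (N+K)^(t+2) ≠ 0 := pow_ne_zero _ hM
    have h2 : (N+K)^(t+3) ≠ 0 := pow_ne_zero _ hM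
    have h3 : N^(t+1) ≠ 0 := pow_ne_zero _ hN'
    have h4 : N^(t+2) ≠ 0 := pow_ne_zero _ hN'
    have e1 : t+1+2 = t+3 := by omega
    have e2 : t+1+1 = t+2 := by omega
    rw [e1, e2, pow_one]
    field_simp
    ring

/-- grid to double-zeta index set -/
def EE : ℕ × ℕ ≃ ↥{p : ℕ×ℕ | p.2 < p.1 ∧ 0 < p.2} where
  toFun q := ⟨(q.1+q.2+2, q.1+1), by
    simp only [Set.mem_setOf_eq]
    omega⟩
  invFun x := (x.1.2 - 1, x.1.1 - x.1.2 - 1)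
  left_inv q := by
    ext <;> simp <;> omega
  right_inv x := by
    apply Subtype.ext
    obtain ⟨⟨m,n⟩, h1, h2⟩ := x
    simp only at h1 h2 ⊢
    ext <;> simp <;> omega

lemma DE_grid (a b : ℕ) : DE a b
    = ∑' q : ℕ × ℕ, ((((q.1+q.2+2:ℕ)):ℝ≥0∞)^a * (((q.1+1:ℕ)):ℝ≥0∞)^b)⁻¹ := by
  rw [DE]
  exact (EE.tsum_eq _).symm
lemma ptwiseE (t : ℕ) (q : ℕ × ℕ) :
    ∑ a ∈ Finset.Icc 2 (t+2),
        ((((q.1+q.2+2:ℕ)):ℝ≥0∞)^a * (((q.1+1:ℕ)):ℝ≥0∞)^(t+3-a))⁻¹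
      + ((((q.2+1:ℕ)):ℝ≥0∞) * (((q.1+q.2+2:ℕ)):ℝ≥0∞)^(t+2))⁻¹
    = ((((q.1+1:ℕ)):ℝ≥0∞)^(t+1) * (((q.2+1:ℕ)):ℝ≥0∞) * (((q.1+q.2+2:ℕ)):ℝ≥0∞))⁻¹ := by
  obtain ⟨n, k⟩ := q
  simp only
  have hN : (0:ℝ) < (n:ℝ)+1 := by positivity
  have hK : (0:ℝ) < (k:ℝ)+1 := by positivity
  have hmain := ptwiseR t ((n:ℝ)+1) ((k:ℝ)+1) hN hK
  calc ∑ a ∈ Finset.Icc 2 (t+2),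
        ((((n+k+2:ℕ)):ℝ≥0∞)^a * (((n+1:ℕ)):ℝ≥0∞)^(t+3-a))⁻¹
      + ((((k+1:ℕ)):ℝ≥0∞) * (((n+k+2:ℕ)):ℝ≥0∞)^(t+2))⁻¹
      = ∑ a ∈ Finset.Icc 2 (t+2),
          ENNReal.ofReal (((((n:ℝ)+1)+((k:ℝ)+1))^a * ((n:ℝ)+1)^(t+3-a))⁻¹)
        + ENNReal.ofReal ((((k:ℝ)+1) * (((n:ℝ)+1)+((k:ℝ)+1))^(t+2))⁻¹) := by
        congr 1
        · apply Finset.sum_congr rfl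
          intro a _
          have c1 : (((n+k+2:ℕ)):ℝ≥0∞)^a * (((n+1:ℕ)):ℝ≥0∞)^(t+3-a)
              = ((((n+k+2)^a * (n+1)^(t+3-a) : ℕ)):ℝ≥0∞) := by push_cast; ring
          rw [c1, natCast_inv_eq (by positivity), one_div]
          congr 1
          push_cast; ring
        · have c2 : (((k+1:ℕ)):ℝ≥0∞) * (((n+k+2:ℕ)):ℝ≥0∞)^(t+2)
              = ((((k+1) * (n+k+2)^(t+2) : ℕ)):ℝ≥0∞) := by push_cast; ring
          rw [c2, natCast_inv_eq (by positivity), one_div]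
          congr 1
          push_cast; ring
    _ = ENNReal.ofReal (∑ a ∈ Finset.Icc 2 (t+2),
          ((((n:ℝ)+1)+((k:ℝ)+1))^a * ((n:ℝ)+1)^(t+3-a))⁻¹
        + (((k:ℝ)+1) * (((n:ℝ)+1)+((k:ℝ)+1))^(t+2))⁻¹) := by
        rw [ENNReal.ofReal_add (Finset.sum_nonneg fun a _ => by positivity) (by positivity),
          ENNReal.ofReal_sum_of_nonneg (fun a _ => by positivity)]
    _ = ENNReal.ofReal ((((n:ℝ)+1)^(t+1) * ((k:ℝ)+1) * (((n:ℝ)+1)+((k:ℝ)+1)))⁻¹) := by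
        rw [hmain]
    _ = ((((n+1:ℕ)):ℝ≥0∞)^(t+1) * (((k+1:ℕ)):ℝ≥0∞) * (((n+k+2:ℕ)):ℝ≥0∞))⁻¹ := by
        have c3 : (((n+1:ℕ)):ℝ≥0∞)^(t+1) * (((k+1:ℕ)):ℝ≥0∞) * (((n+k+2:ℕ)):ℝ≥0∞)
            = ((((n+1)^(t+1) * (k+1) * (n+k+2) : ℕ)):ℝ≥0∞) := by push_cast; ring
        rw [c3, natCast_inv_eq (by positivity), one_div]
        congr 1
        push_cast; ring

lemma T2_eq (t : ℕ) :
    ∑' q : ℕ × ℕ, ((((q.2+1:ℕ)):ℝ≥0∞) * (((q.1+q.2+2:ℕ)):ℝ≥0∞)^(t+2))⁻¹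
      = DE (t+2) 1 := by
  rw [DE_grid, ← (Equiv.prodComm ℕ ℕ).tsum_eq]
  apply tsum_congr
  intro q
  simp only [Equiv.prodComm_apply, Prod.fst_swap, Prod.snd_swap]
  congr 1
  push_cast
  ring

lemma Step1E (t : ℕ) :
    ∑ a ∈ Finset.Icc 2 (t+2), DE a (t+3-a) + DE (t+2) 1
      = ∑' q : ℕ × ℕ,
          ((((q.1+1:ℕ)):ℝ≥0∞)^(t+1) * (((q.2+1:ℕ)):ℝ≥0∞) * (((q.1+q.2+2:ℕ)):ℝ≥0∞))⁻¹ := by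
  have h1 : ∑ a ∈ Finset.Icc 2 (t+2), DE a (t+3-a)
      = ∑' q : ℕ × ℕ, ∑ a ∈ Finset.Icc 2 (t+2),
          ((((q.1+q.2+2:ℕ)):ℝ≥0∞)^a * (((q.1+1:ℕ)):ℝ≥0∞)^(t+3-a))⁻¹ := by
    rw [Finset.sum_congr rfl (fun a _ => DE_grid a (t+3-a))]
    exact (Summable.tsum_finsetSum (fun i _ => ENNReal.summable)).symm
  rw [h1, ← T2_eq t, ← ENNReal.tsum_add]
  apply tsum_congr
  intro q
  exact ptwiseE t q
lemma innerE (n : ℕ) :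
    ∑' k : ℕ, ((((k+1:ℕ)):ℝ≥0∞) * (((n+k+2:ℕ)):ℝ≥0∞))⁻¹
      = ENNReal.ofReal (Hh (n+1) / ((n:ℝ)+1)) := by
  have hs := hasSum_aux (n+1) (Nat.succ_pos n)
  have hterm : ∀ k : ℕ, ((((k+1:ℕ)):ℝ≥0∞) * (((n+k+2:ℕ)):ℝ≥0∞))⁻¹
      = ENNReal.ofReal (1/(((k:ℝ)+1)*((k:ℝ)+1+((n+1:ℕ):ℝ)))) := by
    intro k
    have c1 : (((k+1:ℕ)):ℝ≥0∞) * (((n+k+2:ℕ)):ℝ≥0∞)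
        = ((((k+1)*(n+k+2) : ℕ)):ℝ≥0∞) := by push_cast; ring
    rw [c1, natCast_inv_eq (by positivity)]
    congr 1
    push_cast
    ring
  rw [tsum_congr hterm,
    ← ENNReal.ofReal_tsum_of_nonneg (fun k => by positivity) hs.summable, hs.tsum_eq]
  congr 1
  push_cast
  ring

lemma T1_repr (t : ℕ) :
    ∑' q : ℕ × ℕ,
        ((((q.1+1:ℕ)):ℝ≥0∞)^(t+1) * (((q.2+1:ℕ)):ℝ≥0∞) * (((q.1+q.2+2:ℕ)):ℝ≥0∞))⁻¹
      = ∑' n : ℕ, ENNReal.ofReal (Hh (n+1)) * ((((n+1:ℕ)):ℝ≥0∞)^(t+2))⁻¹ := by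
  have hp : (∑' q : ℕ × ℕ,
        ((((q.1+1:ℕ)):ℝ≥0∞)^(t+1) * (((q.2+1:ℕ)):ℝ≥0∞) * (((q.1+q.2+2:ℕ)):ℝ≥0∞))⁻¹)
      = ∑' (n : ℕ) (k : ℕ),
        ((((n+1:ℕ)):ℝ≥0∞)^(t+1) * (((k+1:ℕ)):ℝ≥0∞) * (((n+k+2:ℕ)):ℝ≥0∞))⁻¹ :=
    ENNReal.tsum_prod (f := fun n k =>
      ((((n+1:ℕ)):ℝ≥0∞)^(t+1) * (((k+1:ℕ)):ℝ≥0∞) * (((n+k+2:ℕ)):ℝ≥0∞))⁻¹)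
  rw [hp]
  apply tsum_congr
  intro n
  have ha0 : (((n+1:ℕ)):ℝ≥0∞)^(t+1) ≠ 0 :=
    pow_ne_zero _ (by exact_mod_cast (Nat.cast_ne_zero (R := ℝ≥0∞)).2 (Nat.succ_ne_zero n))
  have hat : (((n+1:ℕ)):ℝ≥0∞)^(t+1) ≠ ⊤ := ENNReal.pow_ne_top (ENNReal.natCast_ne_top _)
  have hsplit : ∀ k:ℕ,
      ((((n+1:ℕ)):ℝ≥0∞)^(t+1) * (((k+1:ℕ)):ℝ≥0∞) * (((n+k+2:ℕ)):ℝ≥0∞))⁻¹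
      = ((((n+1:ℕ)):ℝ≥0∞)^(t+1))⁻¹
        * (((((k+1:ℕ)):ℝ≥0∞)) * (((n+k+2:ℕ)):ℝ≥0∞))⁻¹ := by
    intro k
    rw [mul_assoc, ENNReal.mul_inv (Or.inl ha0) (Or.inl hat)]
  simp only [hsplit]
  rw [ENNReal.tsum_mul_left, innerE n]
  have h2 : ENNReal.ofReal (Hh (n+1) / ((n:ℝ)+1))
      = ENNReal.ofReal (Hh (n+1)) * ((((n+1:ℕ)):ℝ≥0∞))⁻¹ := by
    rw [div_eq_mul_inv, ENNReal.ofReal_mul (Hh_nonneg _), natCast_inv_eq (Nat.succ_pos n)]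
    congr 1
    rw [one_div]
    congr 1
    push_cast
    ring
  rw [h2]
  have hpow : (((n+1:ℕ)):ℝ≥0∞)^(t+2) = (((n+1:ℕ)):ℝ≥0∞)^(t+1) * (((n+1:ℕ)):ℝ≥0∞) :=
    pow_succ _ _
  rw [hpow, ENNReal.mul_inv (Or.inl ha0) (Or.inl hat), ← mul_assoc,
    mul_comm ((((n+1:ℕ)):ℝ≥0∞)^(t+1))⁻¹ (ENNReal.ofReal (Hh (n+1))), mul_assoc]

lemma DE_fiber (t : ℕ) :
    DE (t+2) 1 = ∑' n : ℕ, ENNReal.ofReal (Hh n) * ((((n+1:ℕ)):ℝ≥0∞)^(t+2))⁻¹ := by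
  rw [DE_eq_indicator]
  have heta : ∀ p : ℕ × ℕ,
      Set.indicator {p : ℕ×ℕ | p.2 < p.1 ∧ 0 < p.2} (gg (t+2) 1) p
      = (fun m n => Set.indicator {p : ℕ×ℕ | p.2 < p.1 ∧ 0 < p.2} (gg (t+2) 1) (m, n)) p.1 p.2 :=
    fun p => rfl
  have hp : (∑' p : ℕ × ℕ, Set.indicator {p : ℕ×ℕ | p.2 < p.1 ∧ 0 < p.2} (gg (t+2) 1) p)
      = ∑' (m : ℕ) (n : ℕ),
        Set.indicator {p : ℕ×ℕ | p.2 < p.1 ∧ 0 < p.2} (gg (t+2) 1) (m, n) :=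
    ENNReal.tsum_prod (f := fun m n =>
      Set.indicator {p : ℕ×ℕ | p.2 < p.1 ∧ 0 < p.2} (gg (t+2) 1) (m, n))
  rw [hp]
  rw [tsum_shift _ (by
    convert tsum_zero with n
    apply Set.indicator_of_notMem
    simp only [Set.mem_setOf_eq]
    omega)]
  apply tsum_congr
  intro m
  have hout : ∀ n ∉ Finset.Ico 1 (m+1),
      Set.indicator {p : ℕ×ℕ | p.2 < p.1 ∧ 0 < p.2} (gg (t+2) 1) (m+1, n) = 0 := by
    intro n hn
    rw [Finset.mem_Ico] at hn
    apply Set.indicator_of_notMem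
    simp only [Set.mem_setOf_eq]
    omega
  rw [tsum_eq_sum hout]
  have hin : ∀ n ∈ Finset.Ico 1 (m+1),
      Set.indicator {p : ℕ×ℕ | p.2 < p.1 ∧ 0 < p.2} (gg (t+2) 1) (m+1, n)
      = ((((m+1:ℕ)):ℝ≥0∞)^(t+2))⁻¹ * ((n:ℝ≥0∞))⁻¹ := by
    intro n hn
    rw [Finset.mem_Ico] at hn
    rw [Set.indicator_of_mem (by simp only [Set.mem_setOf_eq]; omega)]
    rw [gg]
    simp only [pow_one]
    rw [ENNReal.mul_inv
      (Or.inl (pow_ne_zero _ (by exact_mod_cast (Nat.cast_ne_zero (R := ℝ≥0∞)).2 (Nat.succ_ne_zero m))))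
      (Or.inl (ENNReal.pow_ne_top (ENNReal.natCast_ne_top _)))]
  rw [Finset.sum_congr rfl hin, ← Finset.mul_sum]
  have hhsum : ∑ n ∈ Finset.Ico 1 (m+1), ((n:ℝ≥0∞))⁻¹ = ENNReal.ofReal (Hh m) := by
    rw [Finset.sum_Ico_eq_sum_range]
    simp only [Nat.add_sub_cancel]
    have hterm : ∀ i ∈ Finset.range m, (((1+i:ℕ)):ℝ≥0∞)⁻¹
        = ENNReal.ofReal (1/((i:ℝ)+1)) := by
      intro i _
      rw [natCast_inv_eq (by positivity)]
      congr 1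
      push_cast
      ring
    rw [Finset.sum_congr rfl hterm, ← ENNReal.ofReal_sum_of_nonneg (fun i _ => by positivity)]
    rfl
  rw [hhsum, mul_comm]

lemma ZE_repr (t : ℕ) :
    ZE (t+3) = ∑' n : ℕ, ENNReal.ofReal (1/((n:ℝ)+1)) * ((((n+1:ℕ)):ℝ≥0∞)^(t+2))⁻¹ := by
  rw [ZE]
  apply tsum_congr
  intro n
  have hc : ((n:ℝ≥0∞)+1) = (((n+1:ℕ)):ℝ≥0∞) := by push_cast; ring
  rw [hc, show t+3 = (t+2)+1 from rfl, pow_succ',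
    ENNReal.mul_inv
      (Or.inl (by exact_mod_cast (Nat.cast_ne_zero (R := ℝ≥0∞)).2 (Nat.succ_ne_zero n)))
      (Or.inl (ENNReal.natCast_ne_top _)),
    natCast_inv_eq (Nat.succ_pos n)]
  congr 2
  push_cast
  ring

lemma T1_eq (t : ℕ) :
    ∑' q : ℕ × ℕ,
        ((((q.1+1:ℕ)):ℝ≥0∞)^(t+1) * (((q.2+1:ℕ)):ℝ≥0∞) * (((q.1+q.2+2:ℕ)):ℝ≥0∞))⁻¹
      = DE (t+2) 1 + ZE (t+3) := by
  rw [T1_repr, DE_fiber, ZE_repr, ← ENNReal.tsum_add]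
  apply tsum_congr
  intro n
  rw [← add_mul, ← ENNReal.ofReal_add (Hh_nonneg _) (by positivity)]
  congr 2
  exact Hh_succ n

lemma sumthmE (t : ℕ) :
    ∑ a ∈ Finset.Icc 2 (t+2), DE a (t+3-a) = ZE (t+3) := by
  have h := Step1E t
  rw [T1_eq t] at h
  rw [add_comm] at h
  exact (ENNReal.add_right_inj (DE_ne_top (by omega) (le_refl 1))).1 h
lemma stuffleR (a b : ℕ) (ha : 2 ≤ a) (hb : 2 ≤ b) :
    zeta a * zeta b = dzeta a b + dzeta b a + zeta (a+b) := by
  have h1 : DE a b ≠ ⊤ := DE_ne_top ha (by omega)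
  have h2 : DE b a ≠ ⊤ := DE_ne_top hb (by omega)
  have h3 : ZE (a+b) ≠ ⊤ := ZE_ne_top (by omega)
  rw [zeta_eq, zeta_eq, dzeta_eq, dzeta_eq, zeta_eq, ← ENNReal.toReal_mul,
    stuffleE a b (by omega) (by omega),
    ENNReal.toReal_add (ENNReal.add_ne_top.2 ⟨h1, h2⟩) h3, ENNReal.toReal_add h1 h2]

lemma sumthmR (t : ℕ) :
    ∑ a ∈ Finset.Icc 2 (t+2), dzeta a (t+3-a) = zeta (t+3) := by
  have h := congrArg ENNReal.toReal (sumthmE t)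
  rw [ENNReal.toReal_sum (fun a ha => by
    rw [Finset.mem_Icc] at ha
    exact DE_ne_top ha.1 (by omega))] at h
  rw [zeta_eq]
  rw [← h]
  apply Finset.sum_congr rfl
  intro a _
  exact dzeta_eq a (t+3-a)

/-- Euler's reduction formula: for every integer `s ≥ 2`,
`ζ(s,1) = (1/2)·(s·ζ(s+1) − Σ_{j=1}^{s−2} ζ(j+1)·ζ(s−j))`. -/
theorem euler_reduction (s : ℕ) (hs : 2 ≤ s) :
    dzeta s 1 =
      (1 / 2 : ℝ) * ((s : ℝ) * zeta (s + 1)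
        - ∑ j ∈ Finset.Icc 1 (s - 2), zeta (j + 1) * zeta (s - j)) := by
  obtain ⟨t, rfl⟩ : ∃ t, s = t+2 := ⟨s-2, by omega⟩
  have ht2 : t+2-2 = t := by omega
  rw [ht2]
  have hstuff : ∀ j ∈ Finset.Icc 1 t,
      zeta (j+1) * zeta (t+2-j)
      = dzeta (j+1) (t+3-(j+1)) + dzeta (t+2-j) (t+3-(t+2-j)) + zeta (t+3) := by
    intro j hj
    rw [Finset.mem_Icc] at hj
    have h := stuffleR (j+1) (t+2-j) (by omega) (by omega)
    rw [show (j+1)+(t+2-j) = t+3 by omega] at h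
    rw [show t+3-(j+1) = t+2-j by omega, show t+3-(t+2-j) = j+1 by omega]
    exact h
  rw [Finset.sum_congr rfl hstuff]
  rw [Finset.sum_add_distrib, Finset.sum_add_distrib, Finset.sum_const,
    Nat.card_Icc, nsmul_eq_mul]
  have hA : ∑ j ∈ Finset.Icc 1 t, dzeta (j+1) (t+3-(j+1))
      = ∑ a ∈ Finset.Icc 2 (t+1), dzeta a (t+3-a) := by
    apply Finset.sum_nbij' (i := fun j => j+1) (j := fun a => a-1)
    · intro j hj; rw [Finset.mem_Icc] at *; omega
    · intro a ha; rw [Finset.mem_Icc] at *; omega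
    · intro j hj; omega
    · intro a ha; rw [Finset.mem_Icc] at ha; omega
    · intro j hj; rfl
  have hB : ∑ j ∈ Finset.Icc 1 t, dzeta (t+2-j) (t+3-(t+2-j))
      = ∑ a ∈ Finset.Icc 2 (t+1), dzeta a (t+3-a) := by
    apply Finset.sum_nbij' (i := fun j => t+2-j) (j := fun a => t+2-a)
    · intro j hj; rw [Finset.mem_Icc] at *; omega
    · intro a ha; rw [Finset.mem_Icc] at *; omega
    · intro j hj; rw [Finset.mem_Icc] at hj; omega
    · intro a ha; rw [Finset.mem_Icc] at ha; omega
    · intro j hj; rfl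
  rw [hA, hB]
  have hC : ∑ a ∈ Finset.Icc 2 (t+2), dzeta a (t+3-a)
      = ∑ a ∈ Finset.Icc 2 (t+1), dzeta a (t+3-a) + dzeta (t+2) 1 := by
    rw [show t+2 = (t+1)+1 from rfl, Finset.sum_Icc_succ_top (by omega)]
    congr 2
    omega
  have hsum := sumthmR t
  rw [hC] at hsum
  have hcast : ((t+1-1 : ℕ) : ℝ) = (t:ℝ) := by
    push_cast [Nat.add_sub_cancel]
    ring
  rw [hcast]
  have hz : zeta (t+2+1) = zeta (t+3) := rfl
  rw [hz]
  push_cast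
  linarith
end

section
/- Euler's product (quasi-shuffle) identity for double zeta values: for all integers s_1, s_2 ≥ 2, ζ(s_1)·ζ(s_2) = ζ(s_1,s_2) + ζ(s_2,s_1) + ζ(s_1+s_2). -/
lemma summable_aux {k : ℕ} (hk : 2 ≤ k) :
    Summable (fun n : ℕ => (1 : ℝ) / ((n : ℝ) + 1) ^ k) := by
  have h := Real.summable_one_div_nat_pow.mpr hk
  have h2 := (summable_nat_add_iff 1).mpr h
  convert h2 using 2 with n
  case e'_3 => rfl
  push_cast
  ring_nf

/-- Equivalence between below-diagonal pairs (shifted) and the dzeta index set. -/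
def eA : {p : ℕ × ℕ // p.2 < p.1} ≃ {p : ℕ × ℕ // p.2 < p.1 ∧ 0 < p.2} where
  toFun p := ⟨(p.1.1 + 1, p.1.2 + 1), Nat.succ_lt_succ p.2, Nat.succ_pos _⟩
  invFun q := ⟨(q.1.1 - 1, q.1.2 - 1), by obtain ⟨h1, h2⟩ := q.2; simp; omega⟩
  left_inv p := by simp
  right_inv q := by
    obtain ⟨⟨a, b⟩, h1, h2⟩ := q
    simp only [Subtype.mk.injEq, Prod.mk.injEq]
    constructor <;> omega

/-- Equivalence between above-diagonal pairs (shifted) and the dzeta index set. -/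
def eB : {p : ℕ × ℕ // p.1 < p.2} ≃ {p : ℕ × ℕ // p.2 < p.1 ∧ 0 < p.2} where
  toFun p := ⟨(p.1.2 + 1, p.1.1 + 1), Nat.succ_lt_succ p.2, Nat.succ_pos _⟩
  invFun q := ⟨(q.1.2 - 1, q.1.1 - 1), by obtain ⟨h1, h2⟩ := q.2; simp; omega⟩
  left_inv p := by simp
  right_inv q := by
    obtain ⟨⟨a, b⟩, h1, h2⟩ := q
    simp only [Subtype.mk.injEq, Prod.mk.injEq]
    constructor <;> omega

/-- Equivalence between ℕ and the diagonal. -/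
def eC : ℕ ≃ {p : ℕ × ℕ // p.1 = p.2} where
  toFun n := ⟨(n, n), rfl⟩
  invFun p := p.1.1
  left_inv n := rfl
  right_inv p := by
    obtain ⟨⟨a, b⟩, h⟩ := p
    have hab : a = b := h
    subst hab
    rfl

/-- Euler's quasi-shuffle identity: for all integers `s₁, s₂ ≥ 2`,
`ζ(s₁)·ζ(s₂) = ζ(s₁,s₂) + ζ(s₂,s₁) + ζ(s₁+s₂)`. -/
theorem euler_quasi_shuffle (s₁ s₂ : ℕ) (h₁ : 2 ≤ s₁) (h₂ : 2 ≤ s₂) :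
    zeta s₁ * zeta s₂ = dzeta s₁ s₂ + dzeta s₂ s₁ + zeta (s₁ + s₂) := by
  set F : ℕ × ℕ → ℝ := fun p => (1 : ℝ) / (((p.1 : ℝ) + 1) ^ s₁ * ((p.2 : ℝ) + 1) ^ s₂)
    with hF
  have hf₁ := summable_aux h₁
  have hf₂ := summable_aux h₂
  have hFs : Summable F := by
    have := hf₁.mul_of_nonneg hf₂ (fun n => by positivity) (fun n => by positivity)
    convert this using 2 with p
    rw [hF]
    field_simp
  -- product formula
  have hprod : zeta s₁ * zeta s₂ = ∑' p : ℕ × ℕ, F p := by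
    rw [Summable.tsum_prod' hFs (fun b => hFs.prod_factor b)]
    rw [zeta, zeta, ← tsum_mul_right]
    congr 1 with m
    rw [← tsum_mul_left]
    congr 1 with n
    rw [hF]
    field_simp
  -- the three sets
  set A : Set (ℕ × ℕ) := {p | p.2 < p.1} with hA
  set B : Set (ℕ × ℕ) := {p | p.1 < p.2} with hB
  set C : Set (ℕ × ℕ) := {p | p.1 = p.2} with hC
  have hsplit : ∀ p : ℕ × ℕ, F p = A.indicator F p + B.indicator F p + C.indicator F p := by
    intro p
    rcases lt_trichotomy p.2 p.1 with h | h | h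
    · have h2 : ¬ p.1 < p.2 := by omega
      have h3 : ¬ p.1 = p.2 := by omega
      simp [Set.indicator_apply, hA, hB, hC, h, h2, h3]
    · have h2 : ¬ p.2 < p.1 := by omega
      have h3 : ¬ p.1 < p.2 := by omega
      have h4 : p.1 = p.2 := by omega
      simp [Set.indicator_apply, hA, hB, hC, h2, h3, h4]
    · have h2 : ¬ p.2 < p.1 := by omega
      have h3 : ¬ p.1 = p.2 := by omega
      simp [Set.indicator_apply, hA, hB, hC, h, h2, h3]
  have hsA : Summable (A.indicator F) := hFs.indicator A
  have hsB : Summable (B.indicator F) := hFs.indicator B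
  have hsC : Summable (C.indicator F) := hFs.indicator C
  have htsum : ∑' p : ℕ × ℕ, F p
      = (∑' p : A, F ↑p) + (∑' p : B, F ↑p) + (∑' p : C, F ↑p) := by
    calc ∑' p : ℕ × ℕ, F p
        = ∑' p, (A.indicator F p + B.indicator F p + C.indicator F p) :=
          tsum_congr hsplit
      _ = (∑' p, A.indicator F p) + (∑' p, B.indicator F p) + (∑' p, C.indicator F p) := by
          rw [Summable.tsum_add (hsA.add hsB) hsC, Summable.tsum_add hsA hsB]
      _ = _ := by rw [tsum_subtype, tsum_subtype, tsum_subtype]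
  -- identify each piece
  have hAeq : (∑' p : A, F ↑p) = dzeta s₁ s₂ := by
    rw [dzeta, ← eA.tsum_eq]
    apply tsum_congr
    intro p
    simp only [eA, Equiv.coe_fn_mk, hF]
    push_cast
    ring_nf
  have hBeq : (∑' p : B, F ↑p) = dzeta s₂ s₁ := by
    rw [dzeta, ← eB.tsum_eq]
    apply tsum_congr
    intro p
    simp only [eB, Equiv.coe_fn_mk, hF]
    push_cast
    ring_nf
  have hCeq : (∑' p : C, F ↑p) = zeta (s₁ + s₂) := by
    have h5 : (∑' p : C, F ↑p) = ∑' n : ℕ, F ↑(eC n) := (eC.tsum_eq _).symm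
    rw [h5, zeta]
    apply tsum_congr
    intro n
    simp only [eC, Equiv.coe_fn_mk, hF, pow_add]
  rw [hprod, htsum, hAeq, hBeq, hCeq]
end
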